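/- Let A be an n×n Z-matrix that has an eigenvalue with strictly negative real part. Then there exists no componentwise strictly positive vector x with A x ≥ 0 componentwise. -/

import Mathlib

theorem stmt_4 {n : ℕ} (A : Matrix (Fin n) (Fin n) ℝ)
    (hA : ∀ p q, p ≠ q → A p q ≤ 0)
    (hneg : ∃ μ ∈ spectrum ℂ (A.map Complex.ofReal), μ.re < 0) :
    ¬ ∃ x : Fin n → ℝ, (∀ i, 0 < x i) ∧ (∀ i, 0 ≤ A.mulVec x i) := by
  rintro ⟨x, hx, hAx⟩
  obtain ⟨μ, hμ, hμre⟩ := hneg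
  set M : Matrix (Fin n) (Fin n) ℂ := A.map Complex.ofReal with hM
  rw [← AlgEquiv.spectrum_eq (Matrix.toLinAlgEquiv <| Pi.basisFun ℂ (Fin n)),
    ← Module.End.hasEigenvalue_iff_mem_spectrum] at hμ
  obtain ⟨v, hv⟩ := hμ.exists_hasEigenvector
  have hvne : v ≠ 0 := hv.2
  have hmul : M.mulVec v = μ • v := by
    have h := hv.apply_eq_smul
    rw [Matrix.toLinAlgEquiv_apply] at h
    funext k
    have := congrFun h k
    simpa [Pi.basisFun_repr, Pi.basisFun_apply, Pi.single_apply, Finset.sum_ite_eq',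
      Finset.sum_pi_single, show ⇑((Pi.basisFun ℂ (Fin n)).repr v) = v from funext (Pi.basisFun_repr (x := v))] using this
  have hne : (Finset.univ : Finset (Fin n)).Nonempty := by
    rcases Function.ne_iff.mp hvne with ⟨k, _⟩
    exact ⟨k, Finset.mem_univ k⟩
  obtain ⟨i, _, hi⟩ := Finset.exists_max_image Finset.univ (fun j => ‖v j‖ / x j) hne
  set r : ℝ := ‖v i‖ / x i with hr
  have hvj : ∀ j, ‖v j‖ ≤ r * x j := by
    intro j
    have := hi j (Finset.mem_univ j)
    calc ‖v j‖ = ‖v j‖ / x j * x j :=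
          (div_mul_cancel₀ _ (hx j).ne').symm
      _ ≤ r * x j := mul_le_mul_of_nonneg_right this (hx j).le
  have hrpos : 0 < r := by
    rcases Function.ne_iff.mp hvne with ⟨k, hk⟩
    have h1 : 0 < ‖v k‖ := by simpa using hk
    have h2 : 0 < ‖v k‖ / x k := div_pos h1 (hx k)
    exact lt_of_lt_of_le h2 (hi k (Finset.mem_univ k))
  have hvi : ‖v i‖ = r * x i := (div_mul_cancel₀ _ (hx i).ne').symm
  have hvipos : 0 < ‖v i‖ := by rw [hvi]; exact mul_pos hrpos (hx i)
  have heq : ∑ j, (A i j : ℂ) * v j = μ * v i := by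
    have := congrFun hmul i
    simpa [Matrix.mulVec, dotProduct, hM, Matrix.map_apply] using this
  have hsplit : (μ - (A i i : ℂ)) * v i = ∑ j ∈ Finset.univ.erase i, (A i j : ℂ) * v j := by
    rw [Finset.sum_erase_eq_sub (Finset.mem_univ i), heq]
    ring
  have hbound : ‖μ - (A i i : ℂ)‖ * ‖v i‖
      ≤ A i i * ‖v i‖ := by
    have h1 : ‖(μ - (A i i : ℂ)) * v i‖
        ≤ ∑ j ∈ Finset.univ.erase i, (-(A i j)) * (r * x j) := by
      rw [hsplit]
      refine le_trans (norm_sum_le _ _) ?_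
      refine Finset.sum_le_sum fun j hj => ?_
      rw [norm_mul, Complex.norm_real, Real.norm_eq_abs, abs_of_nonpos (hA i j (Finset.ne_of_mem_erase hj).symm)]
      exact mul_le_mul_of_nonneg_left (hvj j)
        (by linarith [hA i j (Finset.ne_of_mem_erase hj).symm])
    have h2 : ∑ j ∈ Finset.univ.erase i, (-(A i j)) * (r * x j)
        ≤ A i i * (r * x i) := by
      have hAxi := hAx i
      have hmv : A.mulVec x i = ∑ j, A i j * x j := by
        simp [Matrix.mulVec, dotProduct]
      have hs : ∑ j ∈ Finset.univ.erase i, A i j * x j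
          = (∑ j, A i j * x j) - A i i * x i :=
        Finset.sum_erase_eq_sub (Finset.mem_univ i)
      have hsum : ∑ j ∈ Finset.univ.erase i, (-(A i j)) * x j ≤ A i i * x i := by
        have h0 : 0 ≤ ∑ j, A i j * x j := by rw [← hmv]; exact hAxi
        have hs' : ∑ j ∈ Finset.univ.erase i, (-(A i j)) * x j
            = -∑ j ∈ Finset.univ.erase i, A i j * x j := by
          rw [← Finset.sum_neg_distrib]; simp [neg_mul]
        rw [hs', hs]; linarith
      calc ∑ j ∈ Finset.univ.erase i, (-(A i j)) * (r * x j)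
          = r * ∑ j ∈ Finset.univ.erase i, (-(A i j)) * x j := by
            rw [Finset.mul_sum]; congr 1; ext j; ring
        _ ≤ r * (A i i * x i) := mul_le_mul_of_nonneg_left hsum hrpos.le
        _ = A i i * (r * x i) := by ring
    rw [norm_mul] at h1
    calc ‖μ - (A i i : ℂ)‖ * ‖v i‖
        ≤ A i i * (r * x i) := le_trans h1 h2
      _ = A i i * ‖v i‖ := by rw [hvi]
  have habs : ‖μ - (A i i : ℂ)‖ ≤ A i i :=
    le_of_mul_le_mul_right (by linarith [hbound]) hvipos
  have hre : |μ.re - A i i| ≤ ‖μ - (A i i : ℂ)‖ := by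
    have := Complex.abs_re_le_norm (μ - (A i i : ℂ))
    simpa using this
  have := abs_le.mp (le_trans hre habs)
  linarith [this.1]
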